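/- Let X be a seminormed real vector space and f₁, …, f_N, g bounded (continuous) linear functionals on X. Then {x : g x ≤ 0} ⊇ ⋂_{k=1}^N {x : f_k x ≤ 0} if and only if there exist α₁, …, α_N ∈ ℝ, α_k ≥ 0, such that g = ∑_{k=1}^N α_k • f_k. (Farkas Lemma for functionals.) -/
import Mathlib

lemma farkas_aux {X : Type*} [AddCommGroup X] [Module ℝ X] :
    ∀ (N : ℕ) (f : Fin N → X →ₗ[ℝ] ℝ) (g : X →ₗ[ℝ] ℝ),
    (∀ x, (∀ k, f k x ≤ 0) → g x ≤ 0) →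
    ∃ α : Fin N → ℝ, (∀ k, 0 ≤ α k) ∧ ∀ x, g x = ∑ k, α k * f k x := by
  intro N
  induction N with
  | zero =>
    intro f g h
    refine ⟨0, fun k => le_rfl, fun x => ?_⟩
    have h1 := h x (fun k => k.elim0)
    have h2 := h (-x) (fun k => k.elim0)
    rw [map_neg] at h2
    simp only [Finset.univ_eq_empty, Finset.sum_empty]
    linarith
  | succ N ih =>
    intro f g h
    by_cases hc : ∀ x, (∀ k : Fin N, f k.castSucc x ≤ 0) → g x ≤ 0
    · obtain ⟨α, hα, hg⟩ := ih (fun k => f k.castSucc) g hc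
      refine ⟨Fin.snoc α 0, ?_, fun x => ?_⟩
      · intro k
        refine Fin.lastCases ?_ ?_ k
        · simp
        · intro i; simpa using hα i
      · rw [Fin.sum_univ_castSucc]
        simp only [Fin.snoc_castSucc, Fin.snoc_last, zero_mul, add_zero]
        exact hg x
    · push_neg at hc
      obtain ⟨x₀, hx₀, hgx₀⟩ := hc
      have hN : 0 < f (Fin.last N) x₀ := by
        by_contra hcon
        push_neg at hcon
        have := h x₀ (fun k => Fin.lastCases hcon hx₀ k)
        linarith
      set c := f (Fin.last N) x₀ with hcdef
      have hc0 : c ≠ 0 := ne_of_gt hN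
      set F : Fin N → X →ₗ[ℝ] ℝ :=
        fun k => f k.castSucc - (f k.castSucc x₀ / c) • f (Fin.last N) with hF
      set G : X →ₗ[ℝ] ℝ := g - (g x₀ / c) • f (Fin.last N) with hG
      have key : ∀ y, (∀ k, F k y ≤ 0) → G y ≤ 0 := by
        intro y hy
        have hy' : ∀ j : Fin (N + 1), f j (y - (f (Fin.last N) y / c) • x₀) ≤ 0 := by
          intro j
          refine Fin.lastCases ?_ ?_ j
          · simp only [map_sub, map_smul, smul_eq_mul]
            rw [← hcdef]
            have e : c * (f (Fin.last N) y / c) = f (Fin.last N) y := by field_simp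
            linarith
          · intro i
            have := hy i
            simp only [hF, LinearMap.sub_apply, LinearMap.smul_apply, smul_eq_mul] at this
            simp only [map_sub, map_smul, smul_eq_mul]
            have e : f (Fin.last N) y / c * f i.castSucc x₀
                = f i.castSucc x₀ / c * f (Fin.last N) y := by ring
            linarith [this, e.le]
        have := h _ hy'
        simp only [map_sub, map_smul, smul_eq_mul] at this
        simp only [hG, LinearMap.sub_apply, LinearMap.smul_apply, smul_eq_mul]
        have e : g x₀ / c * f (Fin.last N) y = f (Fin.last N) y / c * g x₀ := by ring
        linarith
      obtain ⟨β, hβ, hGβ⟩ := ih F G key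
      have hS0 : ∑ k, β k * f k.castSucc x₀ ≤ 0 :=
        Finset.sum_nonpos fun k _ => mul_nonpos_of_nonneg_of_nonpos (hβ k) (hx₀ k)
      set a : ℝ := (g x₀ - ∑ k, β k * f k.castSucc x₀) / c with ha
      have ha0 : 0 ≤ a := by
        apply div_nonneg _ (le_of_lt hN)
        linarith
      refine ⟨Fin.snoc β a, ?_, fun x => ?_⟩
      · intro k
        refine Fin.lastCases ?_ ?_ k
        · simpa using ha0
        · intro i; simpa using hβ i
      · rw [Fin.sum_univ_castSucc]
        simp only [Fin.snoc_castSucc, Fin.snoc_last]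
        have h1 := hGβ x
        simp only [hG, hF, LinearMap.sub_apply, LinearMap.smul_apply, smul_eq_mul] at h1
        have h2 : ∑ k, β k * (f k.castSucc x - f k.castSucc x₀ / c * f (Fin.last N) x)
            = ∑ k, β k * f k.castSucc x
              - (∑ k, β k * f k.castSucc x₀) * (f (Fin.last N) x / c) := by
          rw [Finset.sum_mul, ← Finset.sum_sub_distrib]
          congr 1
          ext k
          ring
        rw [h2] at h1
        rw [ha]
        field_simp at h1 ⊢
        linarith

theorem stmt2 (X : Type*) [SeminormedAddCommGroup X] [NormedSpace ℝ X]
    (N : ℕ) (f : Fin N → (X →L[ℝ] ℝ)) (g : X →L[ℝ] ℝ) :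
    (⋂ k, {x : X | f k x ≤ 0}) ⊆ {x : X | g x ≤ 0} ↔
      ∃ α : Fin N → ℝ, (∀ k, 0 ≤ α k) ∧ g = ∑ k, α k • f k := by
  constructor
  · intro h
    obtain ⟨α, hα, hg⟩ := farkas_aux N (fun k => (f k : X →ₗ[ℝ] ℝ)) (g : X →ₗ[ℝ] ℝ)
      (fun x hx => h (Set.mem_iInter.mpr fun k => hx k))
    refine ⟨α, hα, ?_⟩
    ext x
    simpa using hg x
  · rintro ⟨α, hα, rfl⟩ x hx
    simp only [Set.mem_iInter, Set.mem_setOf_eq] at hx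
    simp only [Set.mem_setOf_eq, ContinuousLinearMap.sum_apply,
      ContinuousLinearMap.coe_smul', Pi.smul_apply, smul_eq_mul]
    exact Finset.sum_nonpos fun k _ => mul_nonpos_of_nonneg_of_nonpos (hα k) (hx k)
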